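/- Let 𝔊 = ℤ[i] and let H = {x + iy : |x| + |y| ≤ 1}. Let z ∈ ℂ' = ℂ \ ℚ(i), let (a_n)_{n≥0} be a continued fraction expansion of z over 𝔊 with iteration sequence (z_n)_{n≥0}, and suppose that for all n ≥ 1: (i) z_n ∈ a_n + H, and (ii) if |a_n| < 3 then a_n is even. Then the denominator sequence (q_n) of the corresponding Q-pair satisfies |q_{n+1}| > |q_n| for all n ≥ 0. -/

import Mathlib

/-- The ring 𝔊 = ℤ[i] of Gaussian integers, as a subset of ℂ. -/
def Gs : Set ℂ := {z | ∃ x y : ℤ, z = (x : ℂ) + (y : ℂ) * Complex.I}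

/-- The field ℚ(i), the quotient field of ℤ[i], as a subset of ℂ. -/
def QI : Set ℂ := {z | ∃ x y : ℚ, z = (x : ℂ) + (y : ℂ) * Complex.I}

/-- The group Σ of transformations of ℂ generated by `z ↦ -z` and `z ↦ z̄`;
its elements are exactly the four maps below. -/
def Sigma4 : Set (ℂ → ℂ) :=
  {id, fun z => -z, fun z => (starRingEnd ℂ) z, fun z => -(starRingEnd ℂ) z}

/-- The reflection `σ_y(z) = -z̄` in the y-axis. -/
def sigY : ℂ → ℂ := fun z => -(starRingEnd ℂ) z

/-- `E⁻¹ = {z : z⁻¹ ∈ E}` for a subset `E` of ℂ. -/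
def invSet (E : Set ℂ) : Set ℂ := {z | z⁻¹ ∈ E}

/-- The Q-pair of a sequence of partial quotients, with indices shifted by one:
`p (n+1)` is the paper's `p_n` and `q (n+1)` is the paper's `q_n`
(so `p 0 = p_{-1} = 1` and `q 0 = q_{-1} = 0`). -/
def IsQPair (a p q : ℕ → ℂ) : Prop :=
  p 0 = 1 ∧ p 1 = a 0 ∧ (∀ n, p (n + 2) = a (n + 1) * p (n + 1) + p n) ∧
  q 0 = 0 ∧ q 1 = 1 ∧ (∀ n, q (n + 2) = a (n + 1) * q (n + 1) + q n)

/-- The closed square `H = {x + iy : |x| + |y| ≤ 1}` with vertices `±1, ±i`. -/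
def Hdiamond : Set ℂ := {z | |z.re| + |z.im| ≤ 1}

/-- A Gaussian integer `x + iy` is even if `x + y` is even. -/
def IsEvenGaussian (z : ℂ) : Prop :=
  ∃ x y : ℤ, z = (x : ℂ) + (y : ℂ) * Complex.I ∧ Even (x + y)

/-! ### Auxiliary material -/

/-- The four Gaussian integers `±1 ± i`. -/
def CSmall (μ : ℂ) : Prop :=
  μ = 1 + Complex.I ∨ μ = 1 - Complex.I ∨ μ = -1 + Complex.I ∨ μ = -1 - Complex.I

lemma csmall_normSq {μ : ℂ} (h : CSmall μ) : Complex.normSq μ = 2 := by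
  rcases h with rfl | rfl | rfl | rfl <;>
    simp [Complex.normSq_apply, Complex.add_re, Complex.add_im, Complex.sub_re, Complex.sub_im,
      Complex.one_re, Complex.one_im, Complex.I_re, Complex.I_im, Complex.neg_re,
      Complex.neg_im] <;> norm_num

lemma csmall_conj {μ : ℂ} (h : CSmall μ) : CSmall ((starRingEnd ℂ) μ) := by
  rcases h with rfl | rfl | rfl | rfl
  · right; left; rw [map_add, map_one, Complex.conj_I]; ring
  · left; rw [map_sub, map_one, Complex.conj_I]; ring
  · right; right; right; rw [map_add, map_neg, map_one, Complex.conj_I]; ring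
  · right; right; left; rw [map_sub, map_neg, map_one, Complex.conj_I]; ring

lemma csmall_coords {μ : ℂ} (h : CSmall μ) :
    ∃ p q : ℤ, μ = (p : ℂ) + (q : ℂ) * Complex.I ∧ (p = 1 ∨ p = -1) ∧ (q = 1 ∨ q = -1) := by
  rcases h with rfl | rfl | rfl | rfl
  · exact ⟨1, 1, by push_cast; ring, Or.inl rfl, Or.inl rfl⟩
  · exact ⟨1, -1, by push_cast; ring, Or.inl rfl, Or.inr rfl⟩
  · exact ⟨-1, 1, by push_cast; ring, Or.inr rfl, Or.inl rfl⟩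
  · exact ⟨-1, -1, by push_cast; ring, Or.inr rfl, Or.inr rfl⟩

lemma csmall_of_coords {p q : ℤ} (hp : p = 1 ∨ p = -1) (hq : q = 1 ∨ q = -1) :
    CSmall ((p : ℂ) + (q : ℂ) * Complex.I) := by
  rcases hp with rfl | rfl <;> rcases hq with rfl | rfl
  · left; push_cast; ring
  · right; left; push_cast; ring
  · right; right; left; push_cast; ring
  · right; right; right; push_cast; ring

lemma csmall_mul_conj {μ : ℂ} (h : CSmall μ) : μ * (starRingEnd ℂ) μ = 2 := by
  rw [Complex.mul_conj, csmall_normSq h]; norm_num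

lemma keyIdentity (μ z W : ℂ) (hμ : μ * (starRingEnd ℂ) μ = 2)
    (hz : z = (starRingEnd ℂ) μ + W) :
    Complex.normSq (1 - μ * z) = Complex.normSq z + (Complex.normSq W - 1) := by
  have hc : ((Complex.normSq (1 - μ * z) : ℝ) : ℂ)
      = ((Complex.normSq z : ℝ) : ℂ) + (((Complex.normSq W : ℝ) : ℂ) - 1) := by
    rw [← Complex.mul_conj, ← Complex.mul_conj, ← Complex.mul_conj]
    subst hz
    simp only [map_sub, map_add, map_mul, map_one, Complex.conj_conj]
    linear_combination (μ * (starRingEnd ℂ) μ - 1 + μ * W + (starRingEnd ℂ) μ * (starRingEnd ℂ) W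
      + W * (starRingEnd ℂ) W) * hμ
  exact_mod_cast hc

lemma stepIdentity (η Q c : ℂ) (hη : η * (starRingEnd ℂ) η = 2) :
    Complex.normSq (η * Q + c) - Complex.normSq Q
      = Complex.normSq (Q + (starRingEnd ℂ) η * c) - Complex.normSq c := by
  have hc : ((Complex.normSq (η * Q + c) : ℝ) : ℂ) - ((Complex.normSq Q : ℝ) : ℂ)
      = ((Complex.normSq (Q + (starRingEnd ℂ) η * c) : ℝ) : ℂ) - ((Complex.normSq c : ℝ) : ℂ) := by
    rw [← Complex.mul_conj, ← Complex.mul_conj, ← Complex.mul_conj, ← Complex.mul_conj]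
    simp only [map_add, map_mul, Complex.conj_conj]
    linear_combination (Q * (starRingEnd ℂ) Q - c * (starRingEnd ℂ) c) * hη
  exact_mod_cast hc

lemma inv_shift_le (μ z W : ℂ) (hμ : Complex.normSq μ = 2)
    (hzW : z = (starRingEnd ℂ) μ + W) (hz0 : z ≠ 0) (hW : Complex.normSq W ≤ 1) :
    Complex.normSq (z⁻¹ - μ) ≤ 1 := by
  have hμ' : μ * (starRingEnd ℂ) μ = 2 := by rw [Complex.mul_conj, hμ]; norm_num
  have hid := keyIdentity μ z W hμ' hzW
  have hfac : z⁻¹ - μ = (1 - μ * z) * z⁻¹ := by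
    have h1 : (1 - μ * z) * z⁻¹ = z⁻¹ - μ * (z * z⁻¹) := by ring
    rw [mul_inv_cancel₀ hz0, mul_one] at h1
    exact h1.symm
  have hzpos : 0 < Complex.normSq z := Complex.normSq_pos.mpr hz0
  have hinv : 0 < (Complex.normSq z)⁻¹ := inv_pos.mpr hzpos
  have hc : Complex.normSq z * (Complex.normSq z)⁻¹ = 1 := mul_inv_cancel₀ (ne_of_gt hzpos)
  have h2 : Complex.normSq (z⁻¹ - μ)
      = Complex.normSq (1 - μ * z) * (Complex.normSq z)⁻¹ := by
    rw [hfac, map_mul, map_inv₀]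
  rw [h2, hid, add_mul]
  have h3 : (Complex.normSq W - 1) * (Complex.normSq z)⁻¹ ≤ 0 :=
    mul_nonpos_of_nonpos_of_nonneg (by linarith) (le_of_lt hinv)
  linarith

lemma normSq_int (x y : ℤ) :
    Complex.normSq ((x : ℂ) + (y : ℂ) * Complex.I) = ((x ^ 2 + y ^ 2 : ℤ) : ℝ) := by
  rw [Complex.normSq_apply]
  simp [Complex.add_re, Complex.add_im, Complex.mul_re, Complex.mul_im,
    Complex.I_re, Complex.I_im, Complex.intCast_re, Complex.intCast_im]
  push_cast
  ring

lemma coords_unique {x y x' y' : ℤ}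
    (h : (x : ℂ) + (y : ℂ) * Complex.I = (x' : ℂ) + (y' : ℂ) * Complex.I) :
    x = x' ∧ y = y' := by
  have hre := congrArg Complex.re h
  have him := congrArg Complex.im h
  simp [Complex.add_re, Complex.add_im, Complex.mul_re, Complex.mul_im,
    Complex.I_re, Complex.I_im, Complex.intCast_re, Complex.intCast_im] at hre him
  exact ⟨by exact_mod_cast hre, by exact_mod_cast him⟩

lemma even_sum_sq {u v : ℤ} (h : Even (u + v)) : Even (u ^ 2 + v ^ 2) := by
  obtain ⟨m, hm⟩ := h
  exact ⟨2 * m ^ 2 - u * v, by linear_combination (u + v + 2 * m) * hm⟩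

lemma int_abs_le_one {u : ℤ} (h : u ^ 2 ≤ 3) : -1 ≤ u ∧ u ≤ 1 := by
  constructor
  · by_contra hc
    push_neg at hc
    have h2 : u ≤ -2 := by omega
    nlinarith [sq_nonneg (u + 2)]
  · by_contra hc
    push_neg at hc
    have h2 : 2 ≤ u := by omega
    nlinarith [sq_nonneg (u - 2)]

lemma sq_two {u v : ℤ} (h : u ^ 2 + v ^ 2 = 2) : (u = 1 ∨ u = -1) ∧ (v = 1 ∨ v = -1) := by
  have hu : u ^ 2 ≤ 3 := by nlinarith [sq_nonneg v]
  have hv : v ^ 2 ≤ 3 := by nlinarith [sq_nonneg u]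
  obtain ⟨hu1, hu2⟩ := int_abs_le_one hu
  obtain ⟨hv1, hv2⟩ := int_abs_le_one hv
  interval_cases u <;> interval_cases v <;> revert h <;> norm_num

lemma int_class (x y : ℤ) (h0 : ¬(x = 0 ∧ y = 0)) (hev : x ^ 2 + y ^ 2 < 9 → Even (x + y)) :
    x ^ 2 + y ^ 2 = 2 ∨ 4 ≤ x ^ 2 + y ^ 2 := by
  by_cases h9 : x ^ 2 + y ^ 2 < 9
  · obtain ⟨r, hr⟩ := even_sum_sq (hev h9)
    have h1 : x ^ 2 + y ^ 2 ≠ 0 := by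
      intro h
      exact h0 ⟨by nlinarith [sq_nonneg x, sq_nonneg y], by nlinarith [sq_nonneg x, sq_nonneg y]⟩
    have h2 : 0 ≤ x ^ 2 + y ^ 2 := by positivity
    omega
  · push_neg at h9
    right; linarith

lemma int_class_b (x y p q : ℤ) (hev : x ^ 2 + y ^ 2 < 9 → Even (x + y))
    (hp : p = 1 ∨ p = -1) (hq : q = 1 ∨ q = -1) :
    (x + p) ^ 2 + (y + q) ^ 2 = 0 ∨ (x + p) ^ 2 + (y + q) ^ 2 = 2
      ∨ 4 ≤ (x + p) ^ 2 + (y + q) ^ 2 := by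
  by_cases h9 : x ^ 2 + y ^ 2 < 9
  · have he := hev h9
    have he2 : Even ((x + p) + (y + q)) := by
      obtain ⟨m, hm⟩ := he
      rcases hp with rfl | rfl <;> rcases hq with rfl | rfl
      · exact ⟨m + 1, by omega⟩
      · exact ⟨m, by omega⟩
      · exact ⟨m, by omega⟩
      · exact ⟨m - 1, by omega⟩
    obtain ⟨r, hr⟩ := even_sum_sq he2
    have h2 : 0 ≤ (x + p) ^ 2 + (y + q) ^ 2 := by positivity
    omega
  · push_neg at h9
    right; right
    by_contra hc
    push_neg at hc
    have h3 : (x + p) ^ 2 ≤ 3 := by nlinarith [sq_nonneg (y + q)]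
    have h4 : (y + q) ^ 2 ≤ 3 := by nlinarith [sq_nonneg (x + p)]
    obtain ⟨ha1, ha2⟩ := int_abs_le_one h3
    obtain ⟨hb1, hb2⟩ := int_abs_le_one h4
    have hx : -2 ≤ x ∧ x ≤ 2 := by rcases hp with rfl | rfl <;> omega
    have hy : -2 ≤ y ∧ y ≤ 2 := by rcases hq with rfl | rfl <;> omega
    have hx2 : x ^ 2 ≤ 4 := by nlinarith [hx.1, hx.2]
    have hy2 : y ^ 2 ≤ 4 := by nlinarith [hy.1, hy.2]
    linarith

lemma adm_main {α : ℂ} (hG : α ∈ Gs) (h0 : α ≠ 0)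
    (he : ‖α‖ < 3 → IsEvenGaussian α) :
    (1 < ‖α‖) ∧ (CSmall α ∨ 2 ≤ ‖α‖) ∧
      ∀ μ, CSmall μ → (α + μ = 0 ∨ CSmall (α + μ) ∨ 2 ≤ ‖α + μ‖) := by
  obtain ⟨x, y, rfl⟩ := hG
  have hxy0 : ¬(x = 0 ∧ y = 0) := by
    rintro ⟨rfl, rfl⟩
    simp at h0
  have habs2 : (‖(x : ℂ) + (y : ℂ) * Complex.I‖) ^ 2 = ((x ^ 2 + y ^ 2 : ℤ) : ℝ) := by
    rw [Complex.sq_norm, normSq_int]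
  have hev : x ^ 2 + y ^ 2 < 9 → Even (x + y) := by
    intro h9
    have h9' : ((x ^ 2 + y ^ 2 : ℤ) : ℝ) < 9 := by exact_mod_cast h9
    have h3 : ‖(x : ℂ) + (y : ℂ) * Complex.I‖ < 3 := by
      nlinarith [norm_nonneg ((x : ℂ) + (y : ℂ) * Complex.I)]
    obtain ⟨x', y', heq, hev'⟩ := he h3
    obtain ⟨hx', hy'⟩ := coords_unique heq
    rw [hx', hy']
    exact hev'
  have hcls := int_class x y hxy0 hev
  have h1lt : 1 < ‖(x : ℂ) + (y : ℂ) * Complex.I‖ := by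
    rcases hcls with h2 | h4
    · have : ((x ^ 2 + y ^ 2 : ℤ) : ℝ) = 2 := by exact_mod_cast h2
      nlinarith [norm_nonneg ((x : ℂ) + (y : ℂ) * Complex.I)]
    · have : (4 : ℝ) ≤ ((x ^ 2 + y ^ 2 : ℤ) : ℝ) := by exact_mod_cast h4
      nlinarith [norm_nonneg ((x : ℂ) + (y : ℂ) * Complex.I)]
  refine ⟨h1lt, ?_, ?_⟩
  · rcases hcls with h2 | h4
    · left
      obtain ⟨hx1, hy1⟩ := sq_two h2
      exact csmall_of_coords hx1 hy1
    · right
      have : (4 : ℝ) ≤ ((x ^ 2 + y ^ 2 : ℤ) : ℝ) := by exact_mod_cast h4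
      nlinarith [norm_nonneg ((x : ℂ) + (y : ℂ) * Complex.I)]
  · intro μ hμ
    obtain ⟨pp, qq, rfl, hp, hq⟩ := csmall_coords hμ
    have hsum : (x : ℂ) + (y : ℂ) * Complex.I + ((pp : ℂ) + (qq : ℂ) * Complex.I)
        = ((x + pp : ℤ) : ℂ) + ((y + qq : ℤ) : ℂ) * Complex.I := by
      push_cast; ring
    rw [hsum]
    have habsb : (‖((x + pp : ℤ) : ℂ) + ((y + qq : ℤ) : ℂ) * Complex.I‖) ^ 2
        = (((x + pp) ^ 2 + (y + qq) ^ 2 : ℤ) : ℝ) := by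
      rw [Complex.sq_norm, normSq_int]
    rcases int_class_b x y pp qq hev hp hq with hb0 | hb2 | hb4
    · left
      have hxp : x + pp = 0 := by nlinarith [sq_nonneg (x + pp), sq_nonneg (y + qq)]
      have hyq : y + qq = 0 := by nlinarith [sq_nonneg (x + pp), sq_nonneg (y + qq)]
      rw [hxp, hyq]
      simp
    · right; left
      obtain ⟨hx1, hy1⟩ := sq_two hb2
      exact csmall_of_coords hx1 hy1
    · right; right
      have : (4 : ℝ) ≤ (((x + pp) ^ 2 + (y + qq) ^ 2 : ℤ) : ℝ) := by exact_mod_cast hb4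
      nlinarith [norm_nonneg (((x + pp : ℤ) : ℂ) + ((y + qq : ℤ) : ℂ) * Complex.I)]

/-- The inductively generated family of "demanded" small shifts `μ` at each level. -/
inductive GoodCF (a : ℕ → ℂ) : ℕ → ℂ → Prop where
  | base (k : ℕ) (h : CSmall (a (k + 2))) : GoodCF a k ((starRingEnd ℂ) (a (k + 2)))
  | step (k : ℕ) (μ' : ℂ) (h : GoodCF a (k + 1) μ') (hs : CSmall (a (k + 2) + μ')) :
      GoodCF a k ((starRingEnd ℂ) (a (k + 2) + μ'))

lemma goodCF_small {a : ℕ → ℂ} {k : ℕ} {μ : ℂ} (h : GoodCF a k μ) : CSmall μ := by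
  cases h with
  | base k h => exact csmall_conj h
  | step k μ' h hs => exact csmall_conj hs

lemma goodCF_close (a zs : ℕ → ℂ)
    (habs : ∀ n, 0 < ‖zs n - a n‖ ∧ ‖zs n - a n‖ < 1)
    (hzs : ∀ n, zs (n + 1) = (zs n - a n)⁻¹) :
    ∀ k μ, GoodCF a k μ → Complex.normSq (zs (k + 1) - a (k + 1) - μ) ≤ 1 := by
  have hw0 : ∀ m, zs m - a m ≠ 0 := fun m => by
    have := (habs m).1
    exact norm_pos_iff.mp this
  have hweq : ∀ m, zs (m + 1) - a (m + 1) = (zs (m + 2))⁻¹ := fun m => by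
    rw [hzs (m + 1), inv_inv]
  have hzne : ∀ m, zs (m + 2) ≠ 0 := fun m => by
    rw [hzs (m + 1)]
    exact inv_ne_zero (hw0 (m + 1))
  intro k μ hg
  induction hg with
  | base k h =>
    rw [hweq k]
    refine inv_shift_le _ _ (zs (k + 2) - a (k + 2)) (csmall_normSq (csmall_conj h)) ?_
      (hzne k) ?_
    · rw [Complex.conj_conj]; ring
    · have := (habs (k + 2)).2
      nlinarith [Complex.sq_norm (zs (k + 2) - a (k + 2)),
        norm_nonneg (zs (k + 2) - a (k + 2))]
  | step k μ' hg' hs ih =>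
    rw [hweq k]
    refine inv_shift_le _ _ (zs (k + 2) - a (k + 2) - μ') (csmall_normSq (csmall_conj hs)) ?_
      (hzne k) ?_
    · rw [Complex.conj_conj]; ring
    · exact ih

lemma abs_lt_abs_of_normSq {A B : ℂ} (h : Complex.normSq B < Complex.normSq A) :
    ‖B‖ < ‖A‖ := by
  by_contra hc
  push_neg at hc
  nlinarith [Complex.sq_norm A, Complex.sq_norm B, norm_nonneg A, norm_nonneg B]

lemma normSq_lt_of_abs {A B : ℂ} (h : ‖B‖ < ‖A‖) :
    Complex.normSq B < Complex.normSq A := by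
  nlinarith [Complex.sq_norm A, Complex.sq_norm B, norm_nonneg A, norm_nonneg B]

lemma tri_lemma (b Q c : ℂ) (hb : 2 ≤ ‖b‖) (hc : ‖c‖ < ‖Q‖) :
    ‖Q‖ < ‖b * Q + c‖ := by
  have h1 : ‖b * Q‖ - ‖c‖ ≤ ‖b * Q + c‖ := by
    have h := norm_sub_norm_le (b * Q) (-c)
    rw [sub_neg_eq_add, norm_neg] at h
    simpa using h
  have h2 : ‖b * Q‖ = ‖b‖ * ‖Q‖ := norm_mul _ _
  nlinarith [norm_nonneg Q, norm_nonneg c]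

/-- Theorem 6.4: for a continued fraction expansion of `z ∈ ℂ'` over ℤ[i] such that,
for all `n ≥ 1`, `z_n ∈ a_n + H` and `a_n` is even whenever `|a_n| < 3`, the
denominators satisfy `|q_{n+1}| > |q_n|` for all `n ≥ 0`. -/
theorem stmt_18 (z : ℂ) (hz : z ∉ QI)
    (a zs p q : ℕ → ℂ)
    (haG : ∀ n, a n ∈ Gs)
    (hzs0 : zs 0 = z)
    (habs : ∀ n, 0 < ‖zs n - a n‖ ∧ ‖zs n - a n‖ < 1)
    (hzs : ∀ n, zs (n + 1) = (zs n - a n)⁻¹)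
    (hpq : IsQPair a p q)
    (hH : ∀ n : ℕ, 1 ≤ n → zs n - a n ∈ Hdiamond)
    (heven : ∀ n : ℕ, 1 ≤ n → ‖a n‖ < 3 → IsEvenGaussian (a n)) :
    ∀ n : ℕ, ‖q (n + 1)‖ < ‖q (n + 2)‖ := by
  obtain ⟨hp0, hp1, hp2, hq0, hq1, hq2⟩ := hpq
  -- |zs (m+1)| > 1
  have hzgt : ∀ m, 1 < ‖zs (m + 1)‖ := by
    intro m
    have h := habs m
    rw [hzs m, norm_inv]
    have hinv : 0 < (‖zs m - a m‖)⁻¹ := inv_pos.mpr h.1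
    have hone : ‖zs m - a m‖ * (‖zs m - a m‖)⁻¹ = 1 :=
      mul_inv_cancel₀ (ne_of_gt h.1)
    nlinarith [h.2]
  have hane : ∀ k : ℕ, a (k + 1) ≠ 0 := by
    intro k h0
    have h := (habs (k + 1)).2
    rw [h0, sub_zero] at h
    linarith [hzgt k]
  -- exclusion of the head configuration `a (k+1) = -μ`
  have hhead : ∀ k μ, GoodCF a k μ → a (k + 1) = -μ → False := by
    intro k μ hg heq
    have h1 := goodCF_close a zs habs hzs k μ hg
    have h2 : zs (k + 1) - a (k + 1) - μ = zs (k + 1) := by rw [heq]; ring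
    rw [h2] at h1
    nlinarith [Complex.sq_norm (zs (k + 1)), hzgt k]
  -- admissibility of the partial quotients
  have hadm : ∀ k : ℕ, (1 < ‖a (k + 1)‖)
      ∧ (CSmall (a (k + 1)) ∨ 2 ≤ ‖a (k + 1)‖)
      ∧ ∀ μ, CSmall μ → (a (k + 1) + μ = 0 ∨ CSmall (a (k + 1) + μ)
          ∨ 2 ≤ ‖a (k + 1) + μ‖) := by
    intro k
    exact adm_main (haG (k + 1)) (hane k) (heven (k + 1) (by omega))
  have main : ∀ n : ℕ, ‖q (n + 1)‖ < ‖q (n + 2)‖ ∧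
      ∀ μ, GoodCF a n μ → ‖q (n + 1)‖ < ‖q (n + 2) + μ * q (n + 1)‖ := by
    intro n
    induction n with
    | zero =>
      have hq2' : q 2 = a 1 := by
        have h := hq2 0
        rw [hq0, hq1, mul_one, add_zero] at h
        exact h
      constructor
      · show ‖q 1‖ < ‖q 2‖
        rw [hq1, hq2', norm_one]
        exact (hadm 0).1
      · intro μ hg
        show ‖q 1‖ < ‖q 2 + μ * q 1‖
        rw [hq1, hq2', mul_one, norm_one]
        rcases (hadm 0).2.2 μ (goodCF_small hg) with hb0 | hbs | hbb
        · exact absurd (eq_neg_of_add_eq_zero_left hb0) (fun h => hhead 0 μ hg h)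
        · have h2 := csmall_normSq hbs
          nlinarith [Complex.sq_norm (a 1 + μ), norm_nonneg (a 1 + μ)]
        · linarith
    | succ n ih =>
      have hrec : q (n + 3) = a (n + 2) * q (n + 2) + q (n + 1) := hq2 (n + 1)
      have hadm2 := hadm (n + 1)
      constructor
      · show ‖q (n + 2)‖ < ‖q (n + 3)‖
        rcases hadm2.2.1 with hsm | hbig
        · have hg : GoodCF a n ((starRingEnd ℂ) (a (n + 2))) := GoodCF.base n hsm
          have h2 := ih.2 _ hg
          have hid := stepIdentity (a (n + 2)) (q (n + 2)) (q (n + 1)) (csmall_mul_conj hsm)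
          have h3 := normSq_lt_of_abs h2
          rw [hrec]
          exact abs_lt_abs_of_normSq (by linarith)
        · rw [hrec]
          exact tri_lemma _ _ _ hbig ih.1
      · intro μ hg
        show ‖q (n + 2)‖ < ‖q (n + 3) + μ * q (n + 2)‖
        have hrw : q (n + 3) + μ * q (n + 2) = (a (n + 2) + μ) * q (n + 2) + q (n + 1) := by
          rw [hrec]; ring
        rw [hrw]
        rcases hadm2.2.2 μ (goodCF_small hg) with hb0 | hbs | hbb
        · exact absurd (eq_neg_of_add_eq_zero_left hb0) (fun h => hhead (n + 1) μ hg h)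
        · have hgb : GoodCF a n ((starRingEnd ℂ) (a (n + 2) + μ)) := GoodCF.step n μ hg hbs
          have h2 := ih.2 _ hgb
          have hid := stepIdentity (a (n + 2) + μ) (q (n + 2)) (q (n + 1)) (csmall_mul_conj hbs)
          have h3 := normSq_lt_of_abs h2
          exact abs_lt_abs_of_normSq (by linarith)
        · exact tri_lemma _ _ _ hbb ih.1
  exact fun n => (main n).1
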